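/- Let H be a finite-dimensional complex Hilbert space, C a subspace of H with orthogonal projection P, and E_1,…,E_l linear operators on H satisfying the Knill–Laflamme condition P E_a† E_{a'} P = λ_a δ_{aa'} P for some reals λ_a ≥ 0 and all a, a'. Then there exist linear operators R_0, R_1,…,R_l on H such that Σ_{b=0}^l R_b† R_b = 𝕀 and, for every v ∈ C and every a ∈ {1,…,l}, Σ_{b=0}^l R_b E_a |v⟩⟨v| E_a† R_b† = λ_a |v⟩⟨v|. Consequently, for every v ∈ C, Σ_{a=1}^l Σ_{b=0}^l R_b E_a |v⟩⟨v| E_a† R_b† = (Σ_{a=1}^l λ_a)·|v⟩⟨v|, i.e., the error operation (E_a)_a followed by the recovery operation (R_b)_b returns every state supported in C to a multiple of itself. -/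

import Mathlib

noncomputable def rankOne {H : Type*} [NormedAddCommGroup H] [InnerProductSpace ℂ H]
    (u v : H) : H →ₗ[ℂ] H where
  toFun w := (inner ℂ v w : ℂ) • u
  map_add' x y := by simp [inner_add_right, add_smul]
  map_smul' c x := by simp [inner_smul_right, smul_smul]

noncomputable def projOnto {H : Type*} [NormedAddCommGroup H] [InnerProductSpace ℂ H]
    [FiniteDimensional ℂ H] (C : Submodule ℂ H) : H →ₗ[ℂ] H :=
  C.subtype ∘ₗ (C.orthogonalProjection : H →L[ℂ] C).toLinearMap

section Helpers
variable {H : Type*} [NormedAddCommGroup H] [InnerProductSpace ℂ H]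

@[simp] lemma rankOne_apply (u v w : H) : rankOne u v w = (inner ℂ v w : ℂ) • u := rfl

lemma rankOne_smul_smul (c : ℂ) (v : H) :
    rankOne (c • v) (c • v) = (starRingEnd ℂ c * c) • rankOne v v := by
  ext w
  simp [rankOne, inner_smul_left, smul_smul]
  ring_nf

@[simp] lemma rankOne_zero_zero : rankOne (0 : H) (0 : H) = 0 := by
  ext w; simp [rankOne]

variable [FiniteDimensional ℂ H]

lemma projOnto_apply_mem {C : Submodule ℂ H} {v : H} (hv : v ∈ C) : projOnto C v = v := by
  have := Submodule.orthogonalProjection_mem_subspace_eq_self (K := C) ⟨v, hv⟩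
  simpa [projOnto] using congrArg (Submodule.subtype C) this

lemma projOnto_mem (C : Submodule ℂ H) (x : H) : projOnto C x ∈ C :=
  (C.orthogonalProjection x).2

lemma projOnto_idem (C : Submodule ℂ H) : projOnto C ∘ₗ projOnto C = projOnto C := by
  ext x
  exact projOnto_apply_mem (projOnto_mem C x)

lemma projOnto_adjoint (C : Submodule ℂ H) :
    LinearMap.adjoint (projOnto C) = projOnto C := by
  symm
  rw [LinearMap.eq_adjoint_iff]
  intro x y
  exact Submodule.inner_starProjection_left_eq_right C x y

lemma adjoint_comp_self_eq_zero {T : H →ₗ[ℂ] H}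
    (h : LinearMap.adjoint T ∘ₗ T = 0) : T = 0 := by
  ext x
  have : (inner ℂ (T x) (T x) : ℂ) = 0 := by
    rw [← LinearMap.adjoint_inner_right]
    have := congrArg (fun S : H →ₗ[ℂ] H => S x) h
    simp at this
    simp [this]
  simpa using inner_self_eq_zero.mp this

lemma term_rankOne (A B : H →ₗ[ℂ] H) (u w : H) :
    A ∘ₗ B ∘ₗ rankOne u w ∘ₗ LinearMap.adjoint B ∘ₗ LinearMap.adjoint A
      = rankOne (A (B u)) (A (B w)) := by
  ext x
  simp [rankOne, LinearMap.adjoint_inner_right, map_smul]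

end Helpers

/-- Sufficiency direction of the Knill–Laflamme theorem in the diagonal case: if the
error operators `E_1, …, E_l` on a finite-dimensional complex Hilbert space `H` satisfy
`P E_a† E_{a'} P = λ_a δ_{aa'} P` for the orthogonal projection `P` onto a subspace
`C`, then there is a trace-preserving recovery operation `(R_b)_{b=0}^{l}` such that
for every `v ∈ C` and every `a`, `∑_b R_b E_a |v⟩⟨v| E_a† R_b† = λ_a |v⟩⟨v|`;
consequently `∑_a ∑_b R_b E_a |v⟩⟨v| E_a† R_b† = (∑_a λ_a) |v⟩⟨v|`. -/
theorem knill_laflamme_recovery_exists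
    {H : Type*} [NormedAddCommGroup H] [InnerProductSpace ℂ H] [FiniteDimensional ℂ H]
    (C : Submodule ℂ H) (l : ℕ)
    (E : Fin l → (H →ₗ[ℂ] H))
    (lam : Fin l → ℝ) (hlam : ∀ a, 0 ≤ lam a)
    (hKL : ∀ a a' : Fin l,
      projOnto C ∘ₗ LinearMap.adjoint (E a) ∘ₗ E a' ∘ₗ projOnto C
        = if a = a' then ((lam a : ℝ) : ℂ) • projOnto C else 0) :
    ∃ R : Fin (l + 1) → (H →ₗ[ℂ] H),
      (∑ b, LinearMap.adjoint (R b) ∘ₗ R b = LinearMap.id) ∧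
      (∀ v ∈ C, ∀ a : Fin l,
        ∑ b, R b ∘ₗ E a ∘ₗ rankOne v v ∘ₗ LinearMap.adjoint (E a) ∘ₗ
            LinearMap.adjoint (R b)
          = ((lam a : ℝ) : ℂ) • rankOne v v) ∧
      (∀ v ∈ C,
        ∑ a : Fin l, ∑ b, R b ∘ₗ E a ∘ₗ rankOne v v ∘ₗ LinearMap.adjoint (E a) ∘ₗ
            LinearMap.adjoint (R b)
          = ((∑ a, lam a : ℝ) : ℂ) • rankOne v v) := by
  classical
  set P : H →ₗ[ℂ] H := projOnto C with hPdef
  set F : Fin l → (H →ₗ[ℂ] H) := fun a => E a ∘ₗ P with hFdef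
  have hFadj : ∀ a, LinearMap.adjoint (F a) = P ∘ₗ LinearMap.adjoint (E a) := by
    intro a
    simp only [hFdef, LinearMap.adjoint_comp, hPdef, projOnto_adjoint]
  have hFF : ∀ a a', LinearMap.adjoint (F a) ∘ₗ F a'
      = if a = a' then ((lam a : ℝ) : ℂ) • P else 0 := by
    intro a a'
    rw [hFadj]
    calc (P ∘ₗ LinearMap.adjoint (E a)) ∘ₗ (E a' ∘ₗ P)
        = P ∘ₗ LinearMap.adjoint (E a) ∘ₗ E a' ∘ₗ P := by
          rw [LinearMap.comp_assoc]
      _ = _ := hKL a a'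
  have hFzero : ∀ a, lam a = 0 → F a = 0 := by
    intro a ha
    apply adjoint_comp_self_eq_zero
    rw [hFF a a, if_pos rfl, ha]
    simp
  set c : Fin l → ℝ := fun a => (Real.sqrt (lam a))⁻¹ with hcdef
  have hc2 : ∀ a, lam a ≠ 0 → (c a) ^ 2 * lam a = 1 := by
    intro a ha
    have h1 : (c a) ^ 2 = (lam a)⁻¹ := by
      show ((Real.sqrt (lam a))⁻¹) ^ 2 = (lam a)⁻¹
      rw [inv_pow, Real.sq_sqrt (hlam a)]
    rw [h1, inv_mul_cancel₀ ha]
  set R' : Fin l → (H →ₗ[ℂ] H) := fun a => ((c a : ℝ) : ℂ) • LinearMap.adjoint (F a)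
    with hR'def
  have hR'adj : ∀ a, LinearMap.adjoint (R' a) = ((c a : ℝ) : ℂ) • F a := by
    intro a
    simp only [hR'def]
    rw [LinearEquiv.map_smulₛₗ LinearMap.adjoint, LinearMap.adjoint_adjoint,
      Complex.conj_ofReal]
  -- Q a = adjoint (R' a) ∘ R' a
  set Q : Fin l → (H →ₗ[ℂ] H) :=
    fun a => LinearMap.adjoint (R' a) ∘ₗ R' a with hQdef
  have hQ : ∀ a, Q a = (((c a) ^ 2 : ℝ) : ℂ) • (F a ∘ₗ LinearMap.adjoint (F a)) := by
    intro a
    show LinearMap.adjoint (R' a) ∘ₗ R' a = _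
    rw [hR'adj]
    simp only [hR'def, LinearMap.smul_comp, LinearMap.comp_smul,
      smul_smul]
    norm_cast
    rw [sq]
  have hQadj : ∀ a, LinearMap.adjoint (Q a) = Q a := by
    intro a
    simp only [hQdef, LinearMap.adjoint_comp, LinearMap.adjoint_adjoint]
  have hQQ : ∀ a a', Q a ∘ₗ Q a' = if a = a' then Q a else 0 := by
    intro a a'
    rw [hQ a, hQ a', LinearMap.smul_comp, LinearMap.comp_smul]
    have hmid : (F a ∘ₗ LinearMap.adjoint (F a)) ∘ₗ (F a' ∘ₗ LinearMap.adjoint (F a'))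
        = F a ∘ₗ ((LinearMap.adjoint (F a) ∘ₗ F a') ∘ₗ LinearMap.adjoint (F a')) := by
      simp only [LinearMap.comp_assoc]
    rw [hmid, hFF a a']
    by_cases hab : a = a'
    · subst hab
      rw [if_pos rfl, if_pos rfl]
      by_cases h0 : lam a = 0
      · simp [hFzero a h0]
      · have hFP : F a ∘ₗ (((lam a : ℝ) : ℂ) • P) ∘ₗ LinearMap.adjoint (F a)
            = ((lam a : ℝ) : ℂ) • (F a ∘ₗ LinearMap.adjoint (F a)) := by
          rw [LinearMap.smul_comp, LinearMap.comp_smul]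
          congr 1
          have : F a ∘ₗ P = F a := by
            simp only [hFdef, LinearMap.comp_assoc, hPdef, projOnto_idem]
          rw [← LinearMap.comp_assoc, this]
        rw [hFP, smul_smul, smul_smul]
        congr 1
        have h1 : (c a) ^ 2 * lam a = 1 := hc2 a h0
        norm_cast
        rw [mul_assoc, h1, mul_one]
    · simp [hab]
  set S : H →ₗ[ℂ] H := ∑ a, Q a with hSdef
  have hSadj : LinearMap.adjoint S = S := by
    simp only [hSdef, map_sum]
    exact Finset.sum_congr rfl fun a _ => hQadj a
  have hSS : S ∘ₗ S = S := by
    have : S * S = S := by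
      rw [hSdef, Finset.sum_mul_sum]
      rw [Finset.sum_congr rfl (fun a _ => Finset.sum_congr rfl
        (fun a' _ => show Q a * Q a' = if a = a' then Q a else 0 from hQQ a a'))]
      simp
    exact this
  set R : Fin (l + 1) → (H →ₗ[ℂ] H) := Fin.cons (LinearMap.id - S) R' with hRdef
  have hR0 : R 0 = LinearMap.id - S := rfl
  have hRs : ∀ a : Fin l, R a.succ = R' a := fun a => rfl
  have hadj_id : LinearMap.adjoint (LinearMap.id : H →ₗ[ℂ] H) = LinearMap.id := by
    rw [← Module.End.one_eq_id, ← LinearMap.star_eq_adjoint, star_one]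
  have hmain : ∀ v ∈ C, ∀ a : Fin l,
      ∑ b, R b ∘ₗ E a ∘ₗ rankOne v v ∘ₗ LinearMap.adjoint (E a) ∘ₗ
          LinearMap.adjoint (R b)
        = ((lam a : ℝ) : ℂ) • rankOne v v := by
    intro v hv a
    have hPv : P v = v := projOnto_apply_mem hv
    have hEv : E a v = F a v := by
      simp [hFdef, hPv]
    have hFadjF : ∀ a', LinearMap.adjoint (F a') (E a v)
        = (if a' = a then ((lam a' : ℝ) : ℂ) else 0) • v := by
      intro a'
      rw [hEv]
      have := congrArg (fun T : H →ₗ[ℂ] H => T v) (hFF a' a)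
      simp only [LinearMap.comp_apply] at this
      rw [this]
      by_cases h : a' = a <;> simp [h, hPv]
    have hterm : ∀ b : Fin (l + 1),
        R b ∘ₗ E a ∘ₗ rankOne v v ∘ₗ LinearMap.adjoint (E a) ∘ₗ
          LinearMap.adjoint (R b)
        = rankOne (R b (E a v)) (R b (E a v)) := by
      intro b
      exact term_rankOne _ (E a) v v
    rw [Finset.sum_congr rfl fun b _ => hterm b]
    rw [Fin.sum_univ_succ]
    simp only [hR0, hRs]
    -- the vector values
    have hR'v : ∀ a', R' a' (E a v)
        = (if a' = a then (((c a' * lam a' : ℝ)) : ℂ) else 0) • v := by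
      intro a'
      simp only [hR'def, LinearMap.smul_apply, hFadjF a', smul_smul]
      by_cases h : a' = a <;> simp [h] <;> push_cast <;> ring_nf
    have hSv : S (E a v) = (((c a ^ 2 * lam a : ℝ)) : ℂ) • E a v := by
      have : S (E a v) = ∑ a', Q a' (E a v) := by
        rw [hSdef]; simp
      rw [this]
      have hQv : ∀ a', Q a' (E a v)
          = (if a' = a then (((c a' ^ 2 * lam a' : ℝ)) : ℂ) else 0) • E a v := by
        intro a'
        rw [hQ a']
        simp only [LinearMap.smul_apply, LinearMap.comp_apply, hFadjF a']
        by_cases h : a' = a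
        · subst h
          simp only [if_pos rfl, map_smul, smul_smul]
          rw [hEv]
          push_cast
          ring_nf
        · simp [h]
      rw [Finset.sum_congr rfl fun a' _ => hQv a']
      simp
    by_cases h0 : lam a = 0
    · have hEv0 : E a v = 0 := by rw [hEv, hFzero a h0]; simp
      simp [hEv0, h0]
    · have hSv' : S (E a v) = E a v := by
        rw [hSv, hc2 a h0]; simp
      simp only [LinearMap.sub_apply, LinearMap.id_apply, hSv', sub_self,
        rankOne_zero_zero, zero_add]
      have hsum : ∀ a', rankOne (R' a' (E a v)) (R' a' (E a v))
          = if a' = a then ((((c a * lam a) ^ 2 : ℝ)) : ℂ) • rankOne v v else 0 := by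
        intro a'
        rw [hR'v a']
        by_cases h : a' = a
        · subst h
          rw [if_pos rfl, if_pos rfl]
          rw [rankOne_smul_smul, Complex.conj_ofReal]
          congr 1
          push_cast
          ring
        · simp [h]
      rw [Finset.sum_congr rfl fun a' _ => hsum a']
      rw [Finset.sum_ite_eq' Finset.univ a]
      simp only [Finset.mem_univ, if_pos]
      congr 1
      have h2 : (c a * lam a) ^ 2 = lam a := by
        calc (c a * lam a) ^ 2 = (c a ^ 2 * lam a) * lam a := by ring
          _ = lam a := by rw [hc2 a h0]; ring
      rw [h2]
  refine ⟨R, ?_, hmain, ?_⟩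
  · rw [Fin.sum_univ_succ]
    simp only [hR0, hRs]
    have h0 : LinearMap.adjoint (LinearMap.id - S) ∘ₗ (LinearMap.id - S)
        = LinearMap.id - S := by
      rw [map_sub, hadj_id, hSadj, LinearMap.sub_comp, LinearMap.comp_sub,
        LinearMap.comp_sub, hSS]
      simp only [LinearMap.id_comp, LinearMap.comp_id]
      abel
    rw [h0]
    have : ∑ a : Fin l, LinearMap.adjoint (R' a) ∘ₗ R' a = S := rfl
    rw [this]
    abel
  · intro v hv
    rw [Finset.sum_congr rfl fun a _ => hmain v hv a, ← Finset.sum_smul]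
    congr 1
    push_cast
    ring
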